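/- Let $\mathcal{X}, A$ be finite sets, $\gamma\in(0,1)$, and suppose rewards $f_1, f_2 : \mathcal{X}\times A \to \mathbb{R}$ and transition kernels $P_1, P_2 : \mathcal{X}\times A \to \mathcal{P}(\mathcal{X})$ satisfy $\sup_{x,a}|f_1(x,a)-f_2(x,a)| \le \epsilon_f$ and $\sup_{x,a}\|P_1(x,a)-P_2(x,a)\|_{\mathrm{TV}} \le \epsilon_P$, with $\|f_2\|_\infty \le F$. Then the corresponding optimal Q-functions $Q_1^*, Q_2^*$ (fixed points of the respective Bellman optimality operators with discount $\gamma$) satisfy $\|Q_1^* - Q_2^*\|_\infty \le \frac{(1-\gamma)\epsilon_f + \gamma F \epsilon_P}{(1-\gamma)^2}$. -/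
import Mathlib


open Finset

variable {𝒳 A : Type*} [Fintype 𝒳] [Fintype A] [Nonempty 𝒳] [Nonempty A]

/-- The Bellman optimality operator associated with reward `f`, transition kernel `P`
and discount `γ`. -/
noncomputable def bellman (f : 𝒳 → A → ℝ) (P : 𝒳 → A → 𝒳 → ℝ) (γ : ℝ)
    (q : 𝒳 → A → ℝ) : 𝒳 → A → ℝ :=
  fun x a => f x a + γ * ∑ y : 𝒳, P x a y *
    (Finset.univ.sup' Finset.univ_nonempty (fun a' : A => q y a'))

/-- Perturbation bound for optimal Q-functions. If the rewards differ by at most `ε_f`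
in sup norm and the transition kernels differ by at most `ε_P` in total variation
(`ℓ¹`) norm, with `‖f₂‖_∞ ≤ F`, then the corresponding optimal Q-functions satisfy
`‖Q₁* - Q₂*‖_∞ ≤ ((1-γ)ε_f + γ F ε_P) / (1-γ)²`. -/
theorem optimal_Q_perturbation_bound
    (f₁ f₂ : 𝒳 → A → ℝ) (P₁ P₂ : 𝒳 → A → 𝒳 → ℝ)
    (hP₁_nonneg : ∀ x a y, 0 ≤ P₁ x a y) (hP₁_sum : ∀ x a, ∑ y : 𝒳, P₁ x a y = 1)
    (hP₂_nonneg : ∀ x a y, 0 ≤ P₂ x a y) (hP₂_sum : ∀ x a, ∑ y : 𝒳, P₂ x a y = 1)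
    (γ : ℝ) (hγ0 : 0 < γ) (hγ1 : γ < 1)
    (εf εP F : ℝ)
    (hf : ∀ x a, |f₁ x a - f₂ x a| ≤ εf)
    (hP : ∀ x a, ∑ y : 𝒳, |P₁ x a y - P₂ x a y| ≤ εP)
    (hF : ∀ x a, |f₂ x a| ≤ F)
    (Q₁ Q₂ : 𝒳 → A → ℝ)
    (hQ₁ : bellman f₁ P₁ γ Q₁ = Q₁) (hQ₂ : bellman f₂ P₂ γ Q₂ = Q₂) :
    ∀ x a, |Q₁ x a - Q₂ x a| ≤ ((1 - γ) * εf + γ * F * εP) / (1 - γ) ^ 2 := by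
  set V₁ : 𝒳 → ℝ := fun y => Finset.univ.sup' Finset.univ_nonempty (fun a' : A => Q₁ y a')
    with hV₁
  set V₂ : 𝒳 → ℝ := fun y => Finset.univ.sup' Finset.univ_nonempty (fun a' : A => Q₂ y a')
    with hV₂
  set N : ℝ := (Finset.univ : Finset (𝒳 × A)).sup' Finset.univ_nonempty
    (fun p => |Q₂ p.1 p.2|) with hN
  set M : ℝ := (Finset.univ : Finset (𝒳 × A)).sup' Finset.univ_nonempty
    (fun p => |Q₁ p.1 p.2 - Q₂ p.1 p.2|) with hM
  have hNle : ∀ x a, |Q₂ x a| ≤ N := fun x a =>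
    Finset.le_sup' (f := fun p : 𝒳 × A => |Q₂ p.1 p.2|) (b := (x, a)) (Finset.mem_univ _)
  have hMle : ∀ x a, |Q₁ x a - Q₂ x a| ≤ M := fun x a =>
    Finset.le_sup' (f := fun p : 𝒳 × A => |Q₁ p.1 p.2 - Q₂ p.1 p.2|) (b := (x, a))
      (Finset.mem_univ _)
  have hN0 : 0 ≤ N := le_trans (abs_nonneg _) (hNle Classical.ofNonempty Classical.ofNonempty)
  have hεP0 : 0 ≤ εP := le_trans (Finset.sum_nonneg fun y _ => abs_nonneg _)
    (hP Classical.ofNonempty Classical.ofNonempty)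
  -- |V₂ y| ≤ N
  have hV₂le : ∀ y, |V₂ y| ≤ N := by
    intro y
    rw [abs_le]
    constructor
    · have := Finset.le_sup' (f := fun a' : A => Q₂ y a')
        (b := (Classical.ofNonempty : A)) (Finset.mem_univ _)
      have h2 := hNle y Classical.ofNonempty
      rw [abs_le] at h2
      linarith [this]
    · exact Finset.sup'_le _ _ fun a _ => le_trans (le_abs_self _) (hNle y a)
  -- |V₁ y - V₂ y| ≤ M
  have hVdiff : ∀ y, |V₁ y - V₂ y| ≤ M := by
    intro y
    rw [abs_sub_le_iff]
    constructor
    · rw [sub_le_iff_le_add]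
      refine Finset.sup'_le _ _ fun a _ => ?_
      have h := hMle y a
      rw [abs_le] at h
      have := Finset.le_sup' (f := fun a' : A => Q₂ y a') (b := a) (Finset.mem_univ _)
      simp only [hV₂]
      linarith [this]
    · rw [sub_le_iff_le_add]
      refine Finset.sup'_le _ _ fun a _ => ?_
      have h := hMle y a
      rw [abs_le] at h
      have := Finset.le_sup' (f := fun a' : A => Q₁ y a') (b := a) (Finset.mem_univ _)
      simp only [hV₁]
      linarith [this]
  -- N ≤ F / (1-γ) i.e. (1-γ) N ≤ F
  have hNF : (1 - γ) * N ≤ F := by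
    have key : ∀ x a, |Q₂ x a| ≤ F + γ * N := by
      intro x a
      have hfix : f₂ x a + γ * ∑ y : 𝒳, P₂ x a y * V₂ y = Q₂ x a := by
        have := congrFun (congrFun hQ₂ x) a
        simpa [bellman, hV₂] using this
      rw [← hfix]
      calc |f₂ x a + γ * ∑ y : 𝒳, P₂ x a y * V₂ y|
          ≤ |f₂ x a| + γ * |∑ y : 𝒳, P₂ x a y * V₂ y| :=
            (abs_add_le _ _).trans (by rw [abs_mul, abs_of_pos hγ0])
        _ ≤ F + γ * N := by
            refine add_le_add (hF x a) (mul_le_mul_of_nonneg_left ?_ hγ0.le)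
            calc |∑ y : 𝒳, P₂ x a y * V₂ y| ≤ ∑ y : 𝒳, |P₂ x a y * V₂ y| :=
                Finset.abs_sum_le_sum_abs _ _
              _ ≤ ∑ y : 𝒳, P₂ x a y * N := by
                  refine Finset.sum_le_sum fun y _ => ?_
                  rw [abs_mul, abs_of_nonneg (hP₂_nonneg x a y)]
                  exact mul_le_mul_of_nonneg_left (hV₂le y) (hP₂_nonneg x a y)
              _ = N := by rw [← Finset.sum_mul, hP₂_sum, one_mul]
    have : N ≤ F + γ * N := Finset.sup'_le _ _ fun p _ => key p.1 p.2
    linarith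
  -- main recursion: (1-γ) M ≤ εf + γ * εP * N
  have hMrec : (1 - γ) * M ≤ εf + γ * εP * N := by
    have key : ∀ x a, |Q₁ x a - Q₂ x a| ≤ εf + γ * M + γ * εP * N := by
      intro x a
      have hfix1 : Q₁ x a = f₁ x a + γ * ∑ y : 𝒳, P₁ x a y * V₁ y :=
        (congrFun (congrFun hQ₁ x) a).symm
      have hfix2 : Q₂ x a = f₂ x a + γ * ∑ y : 𝒳, P₂ x a y * V₂ y :=
        (congrFun (congrFun hQ₂ x) a).symm
      have hsplit : Q₁ x a - Q₂ x a = (f₁ x a - f₂ x a)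
          + γ * ∑ y : 𝒳, P₁ x a y * (V₁ y - V₂ y)
          + γ * ∑ y : 𝒳, (P₁ x a y - P₂ x a y) * V₂ y := by
        rw [hfix1, hfix2]
        have : ∑ y : 𝒳, P₁ x a y * (V₁ y - V₂ y) + ∑ y : 𝒳, (P₁ x a y - P₂ x a y) * V₂ y
            = ∑ y : 𝒳, P₁ x a y * V₁ y - ∑ y : 𝒳, P₂ x a y * V₂ y := by
          rw [← Finset.sum_add_distrib, ← Finset.sum_sub_distrib]
          congr 1; funext y; ring
        nlinarith [this]
      have h1 : |∑ y : 𝒳, P₁ x a y * (V₁ y - V₂ y)| ≤ M := by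
        calc |∑ y : 𝒳, P₁ x a y * (V₁ y - V₂ y)| ≤ ∑ y : 𝒳, |P₁ x a y * (V₁ y - V₂ y)| :=
            Finset.abs_sum_le_sum_abs _ _
          _ ≤ ∑ y : 𝒳, P₁ x a y * M := by
              refine Finset.sum_le_sum fun y _ => ?_
              rw [abs_mul, abs_of_nonneg (hP₁_nonneg x a y)]
              exact mul_le_mul_of_nonneg_left (hVdiff y) (hP₁_nonneg x a y)
          _ = M := by rw [← Finset.sum_mul, hP₁_sum, one_mul]
      have h2 : |∑ y : 𝒳, (P₁ x a y - P₂ x a y) * V₂ y| ≤ εP * N := by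
        calc |∑ y : 𝒳, (P₁ x a y - P₂ x a y) * V₂ y|
            ≤ ∑ y : 𝒳, |(P₁ x a y - P₂ x a y) * V₂ y| := Finset.abs_sum_le_sum_abs _ _
          _ ≤ ∑ y : 𝒳, |P₁ x a y - P₂ x a y| * N := by
              refine Finset.sum_le_sum fun y _ => ?_
              rw [abs_mul]
              exact mul_le_mul_of_nonneg_left (hV₂le y) (abs_nonneg _)
          _ = (∑ y : 𝒳, |P₁ x a y - P₂ x a y|) * N := by rw [Finset.sum_mul]
          _ ≤ εP * N := mul_le_mul_of_nonneg_right (hP x a) hN0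
      calc |Q₁ x a - Q₂ x a| ≤ |f₁ x a - f₂ x a|
          + γ * |∑ y : 𝒳, P₁ x a y * (V₁ y - V₂ y)|
          + γ * |∑ y : 𝒳, (P₁ x a y - P₂ x a y) * V₂ y| := by
            rw [hsplit]
            refine (abs_add_le _ _).trans (add_le_add ((abs_add_le _ _).trans (add_le_add le_rfl ?_)) ?_)
            · rw [abs_mul, abs_of_pos hγ0]
            · rw [abs_mul, abs_of_pos hγ0]
        _ ≤ εf + γ * M + γ * εP * N := by
            have := mul_le_mul_of_nonneg_left h1 hγ0.le
            have := mul_le_mul_of_nonneg_left h2 hγ0.le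
            have := hf x a
            nlinarith
    have : M ≤ εf + γ * M + γ * εP * N := Finset.sup'_le _ _ fun p _ => key p.1 p.2
    linarith
  intro x a
  have hMle' := hMle x a
  have hfinal : (1 - γ) ^ 2 * M ≤ (1 - γ) * εf + γ * F * εP := by
    have h1γ : (0:ℝ) < 1 - γ := by linarith
    nlinarith [mul_le_mul_of_nonneg_left hNF (mul_nonneg hγ0.le hεP0),
      mul_le_mul_of_nonneg_left hMrec h1γ.le]
  have h1γ2 : (0:ℝ) < (1 - γ) ^ 2 := pow_pos (by linarith) 2
  rw [le_div_iff₀ h1γ2]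
  nlinarith [hMle']
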